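/- For every ψ, ψ' in S(ℑ), the function (u,s) ↦ ψ(u,s)·∂_uψ'(u,s) − ψ'(u,s)·∂_uψ(u,s) is integrable on ℝ×S², so that σ_ℑ(ψ,ψ') is well defined, and σ_ℑ is a bilinear antisymmetric form on S(ℑ). Moreover σ_ℑ is weakly non-degenerate: if ψ' ∈ S(ℑ) satisfies σ_ℑ(ψ,ψ') = 0 for every ψ ∈ S(ℑ), then ψ' = 0. -/

import Mathlib

open MeasureTheory Metric Filter
open scoped Manifold Topology ENNReal

noncomputable section

/-- Euclidean 3-space. -/
abbrev E3 : Type := EuclideanSpace ℝ (Fin 3)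

/-- The unit 2-sphere in Euclidean 3-space. -/
abbrev S2 : Type := Metric.sphere (0 : E3) 1

instance : Fact (Module.finrank ℝ E3 = 2 + 1) := ⟨by simp⟩

/-- The standard (rotation-invariant, total mass 4π) surface measure on the unit sphere. -/
instance : MeasureSpace S2 := ⟨(volume : Measure E3).toSphere⟩

/-- Partial derivative in the first (`u`) variable. -/
def uderiv (ψ : ℝ × S2 → ℝ) : ℝ × S2 → ℝ := fun p => deriv (fun u => ψ (u, p.2)) p.1

/-- Membership in `S(ℑ)`: smooth real functions on `ℝ × S²` that are square integrable
together with their `u`-derivative. -/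
def InSIm (ψ : ℝ × S2 → ℝ) : Prop :=
  ContMDiff ((𝓘(ℝ, ℝ)).prod (𝓡 2)) 𝓘(ℝ, ℝ) (⊤ : ℕ∞) ψ ∧
  MemLp ψ 2 (volume : Measure (ℝ × S2)) ∧
  MemLp (uderiv ψ) 2 (volume : Measure (ℝ × S2))

/-- The boundary symplectic form `σ_ℑ`. -/
def sigmaIm (ψ ψ' : ℝ × S2 → ℝ) : ℝ :=
  ∫ p : ℝ × S2, (ψ p * uderiv ψ' p - ψ' p * uderiv ψ p)

section Aux

open Set
open scoped Pointwise

/-- The sphere measure is positive on nonempty open sets. -/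
instance sphereOpenPos : (volume : Measure S2).IsOpenPosMeasure := by
  constructor
  intro U hU hne
  have hm : MeasurableSet U := hU.measurableSet
  have happ : (volume : Measure S2) U
      = Module.finrank ℝ E3 * (volume : Measure E3) (Ioo (0:ℝ) 1 • (((↑) : S2 → E3) '' U)) :=
    Measure.toSphere_apply' _ hm
  rw [happ]
  obtain ⟨V, hV, hVU⟩ := isOpen_induced_iff.mp hU
  have himg : (((↑) : S2 → E3) '' U) = V ∩ sphere (0:E3) 1 := by
    rw [← hVU, Subtype.image_preimage_coe, Set.inter_comm]
  have hset : Ioo (0:ℝ) 1 • (((↑) : S2 → E3) '' U)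
      = {y : E3 | 0 < ‖y‖ ∧ ‖y‖ < 1} ∩ (fun y : E3 => ‖y‖⁻¹ • y) ⁻¹' V := by
    ext y
    constructor
    · rintro ⟨r, hr, x, hx, rfl⟩
      have hx1 : ‖x‖ = 1 := by
        obtain ⟨x', _, rfl⟩ := hx
        simpa using mem_sphere_zero_iff_norm.mp x'.2
      have hr0 : (0:ℝ) < r := hr.1
      have hn : ‖r • x‖ = r := by
        rw [norm_smul, hx1, mul_one, Real.norm_eq_abs, abs_of_pos hr0]
      refine ⟨⟨by rw [hn]; exact hr0, by rw [hn]; exact hr.2⟩, ?_⟩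
      have : ‖r • x‖⁻¹ • r • x = x := by
        rw [hn, smul_smul, inv_mul_cancel₀ (ne_of_gt hr0), one_smul]
      simp only [Set.mem_preimage, this]
      have : x ∈ V ∩ sphere (0:E3) 1 := himg ▸ hx
      exact this.1
    · rintro ⟨⟨h0, h1⟩, hVmem⟩
      refine ⟨‖y‖, ⟨h0, h1⟩, ‖y‖⁻¹ • y, ?_, ?_⟩
      · rw [himg]
        refine ⟨hVmem, ?_⟩
        rw [mem_sphere_zero_iff_norm, norm_smul, Real.norm_eq_abs,
          abs_of_pos (inv_pos.mpr h0), inv_mul_cancel₀ (ne_of_gt h0)]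
      · show ‖y‖ • ‖y‖⁻¹ • y = y
        rw [smul_smul, mul_inv_cancel₀ (ne_of_gt h0), one_smul]
  have hopen : IsOpen (Ioo (0:ℝ) 1 • (((↑) : S2 → E3) '' U)) := by
    rw [hset]
    have hA : IsOpen {y : E3 | 0 < ‖y‖ ∧ ‖y‖ < 1} := by
      have : {y : E3 | 0 < ‖y‖ ∧ ‖y‖ < 1}
          = (fun y : E3 => ‖y‖) ⁻¹' (Ioo 0 1) := rfl
      rw [this]
      exact isOpen_Ioo.preimage continuous_norm
    have hg : ContinuousOn (fun y : E3 => ‖y‖⁻¹ • y) {y : E3 | 0 < ‖y‖ ∧ ‖y‖ < 1} :=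
      ((continuous_norm.continuousOn).inv₀ fun y hy => ne_of_gt hy.1).smul
        continuous_id.continuousOn
    exact hg.isOpen_inter_preimage hA hV
  have hnonempty : (Ioo (0:ℝ) 1 • (((↑) : S2 → E3) '' U)).Nonempty := by
    obtain ⟨x, hx⟩ := hne
    exact ⟨(1/2 : ℝ) • (x : E3), Set.smul_mem_smul (by norm_num) ⟨x, hx, rfl⟩⟩
  have : (0:ℝ≥0∞) < (volume : Measure E3) (Ioo (0:ℝ) 1 • (((↑) : S2 → E3) '' U)) :=
    hopen.measure_pos _ hnonempty
  exact mul_ne_zero (by simp) this.ne'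

instance sphereFinite : IsFiniteMeasure (volume : Measure S2) :=
  show IsFiniteMeasure ((volume : Measure E3).toSphere) from inferInstance

instance prodOpenPos : (volume : Measure (ℝ × S2)).IsOpenPosMeasure :=
  show ((volume : Measure ℝ).prod (volume : Measure S2)).IsOpenPosMeasure from inferInstance

/-- Products of square-integrable functions are integrable. -/
lemma memL2_mul_integrable {f g : ℝ × S2 → ℝ}
    (hf : MemLp f 2 (volume : Measure (ℝ × S2)))
    (hg : MemLp g 2 (volume : Measure (ℝ × S2))) :
    Integrable (fun p => f p * g p) (volume : Measure (ℝ × S2)) := by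
  have h := MeasureTheory.L2.integrable_inner (𝕜 := ℝ) (hf.toLp f) (hg.toLp g)
  refine h.congr ?_
  filter_upwards [hf.coeFn_toLp, hg.coeFn_toLp] with p h1 h2
  simp [h1, h2, RCLike.inner_apply, mul_comm]

/-- Slices of smooth functions are differentiable in the `u`-variable. -/
lemma slice_differentiable {ψ : ℝ × S2 → ℝ}
    (hψ : ContMDiff ((𝓘(ℝ, ℝ)).prod (𝓡 2)) 𝓘(ℝ, ℝ) (⊤ : ℕ∞) ψ) (s : S2) :
    Differentiable ℝ (fun u : ℝ => ψ (u, s)) := by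
  have h : ContMDiff 𝓘(ℝ, ℝ) 𝓘(ℝ, ℝ) (⊤ : ℕ∞) (fun u : ℝ => ψ (u, s)) :=
    hψ.comp (contMDiff_id.prodMk contMDiff_const)
  exact h.contDiff.differentiable (by simp)

end Aux

/-- For all `ψ, ψ' ∈ S(ℑ)` the integrand of `σ_ℑ` is integrable, `σ_ℑ` is a bilinear
antisymmetric form on `S(ℑ)`, and it is weakly non-degenerate. -/
theorem sigmaIm_wellDefined_bilinear_antisymm_nondegenerate :
    (∀ ψ ψ' : ℝ × S2 → ℝ, InSIm ψ → InSIm ψ' →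
      Integrable (fun p : ℝ × S2 => ψ p * uderiv ψ' p - ψ' p * uderiv ψ p)
        (volume : Measure (ℝ × S2))) ∧
    (∀ ψ ψ' : ℝ × S2 → ℝ, InSIm ψ → InSIm ψ' → sigmaIm ψ ψ' = - sigmaIm ψ' ψ) ∧
    (∀ ψ₁ ψ₂ ψ' : ℝ × S2 → ℝ, InSIm ψ₁ → InSIm ψ₂ → InSIm ψ' →
      sigmaIm (ψ₁ + ψ₂) ψ' = sigmaIm ψ₁ ψ' + sigmaIm ψ₂ ψ') ∧
    (∀ (c : ℝ) (ψ ψ' : ℝ × S2 → ℝ), InSIm ψ → InSIm ψ' →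
      sigmaIm (c • ψ) ψ' = c * sigmaIm ψ ψ') ∧
    (∀ ψ ψ₁' ψ₂' : ℝ × S2 → ℝ, InSIm ψ → InSIm ψ₁' → InSIm ψ₂' →
      sigmaIm ψ (ψ₁' + ψ₂') = sigmaIm ψ ψ₁' + sigmaIm ψ ψ₂') ∧
    (∀ (c : ℝ) (ψ ψ' : ℝ × S2 → ℝ), InSIm ψ → InSIm ψ' →
      sigmaIm ψ (c • ψ') = c * sigmaIm ψ ψ') ∧
    (∀ ψ' : ℝ × S2 → ℝ, InSIm ψ' → (∀ ψ : ℝ × S2 → ℝ, InSIm ψ → sigmaIm ψ ψ' = 0) →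
      ψ' = 0) := by
  -- integrability of the integrand
  have hInt : ∀ ψ ψ' : ℝ × S2 → ℝ, InSIm ψ → InSIm ψ' →
      Integrable (fun p : ℝ × S2 => ψ p * uderiv ψ' p - ψ' p * uderiv ψ p)
        (volume : Measure (ℝ × S2)) := by
    intro ψ ψ' hψ hψ'
    exact (memL2_mul_integrable hψ.2.1 hψ'.2.2).sub (memL2_mul_integrable hψ'.2.1 hψ.2.2)
  -- pointwise additivity of uderiv
  have hUadd : ∀ ψ₁ ψ₂ : ℝ × S2 → ℝ, InSIm ψ₁ → InSIm ψ₂ → ∀ p,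
      uderiv (ψ₁ + ψ₂) p = uderiv ψ₁ p + uderiv ψ₂ p := by
    intro ψ₁ ψ₂ h₁ h₂ p
    have d1 := (slice_differentiable h₁.1 p.2) p.1
    have d2 := (slice_differentiable h₂.1 p.2) p.1
    simpa [uderiv, Pi.add_apply] using deriv_fun_add d1 d2
  have hUsmul : ∀ (c : ℝ) (ψ : ℝ × S2 → ℝ), ∀ p : ℝ × S2,
      uderiv (c • ψ) p = c * uderiv ψ p := by
    intro c ψ p
    have : (fun u : ℝ => (c • ψ) (u, p.2)) = fun u => c * ψ (u, p.2) := rfl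
    simp only [uderiv, this]
    exact deriv_const_mul_field c
  refine ⟨hInt, ?_, ?_, ?_, ?_, ?_, ?_⟩
  · -- antisymmetry
    intro ψ ψ' _ _
    rw [sigmaIm, sigmaIm, ← integral_neg]
    congr 1; funext p; ring
  · -- additivity in first argument
    intro ψ₁ ψ₂ ψ' h₁ h₂ h'
    have key : (fun p : ℝ × S2 => (ψ₁ + ψ₂) p * uderiv ψ' p - ψ' p * uderiv (ψ₁ + ψ₂) p)
        = fun p => (ψ₁ p * uderiv ψ' p - ψ' p * uderiv ψ₁ p)
            + (ψ₂ p * uderiv ψ' p - ψ' p * uderiv ψ₂ p) := by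
      funext p
      rw [hUadd ψ₁ ψ₂ h₁ h₂ p, Pi.add_apply]
      ring
    rw [sigmaIm, key, integral_add (hInt ψ₁ ψ' h₁ h') (hInt ψ₂ ψ' h₂ h')]
    rfl
  · -- homogeneity in first argument
    intro c ψ ψ' hψ hψ'
    have key : (fun p : ℝ × S2 => (c • ψ) p * uderiv ψ' p - ψ' p * uderiv (c • ψ) p)
        = fun p => c • (ψ p * uderiv ψ' p - ψ' p * uderiv ψ p) := by
      funext p
      rw [hUsmul c ψ p, Pi.smul_apply]
      simp only [smul_eq_mul]
      ring
    rw [sigmaIm, key, integral_smul]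
    rfl
  · -- additivity in second argument
    intro ψ ψ₁' ψ₂' hψ h₁ h₂
    have key : (fun p : ℝ × S2 => ψ p * uderiv (ψ₁' + ψ₂') p - (ψ₁' + ψ₂') p * uderiv ψ p)
        = fun p => (ψ p * uderiv ψ₁' p - ψ₁' p * uderiv ψ p)
            + (ψ p * uderiv ψ₂' p - ψ₂' p * uderiv ψ p) := by
      funext p
      rw [hUadd ψ₁' ψ₂' h₁ h₂ p, Pi.add_apply]
      ring
    rw [sigmaIm, key, integral_add (hInt ψ ψ₁' hψ h₁) (hInt ψ ψ₂' hψ h₂)]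
    rfl
  · -- homogeneity in second argument
    intro c ψ ψ' hψ hψ'
    have key : (fun p : ℝ × S2 => ψ p * uderiv (c • ψ') p - (c • ψ') p * uderiv ψ p)
        = fun p => c • (ψ p * uderiv ψ' p - ψ' p * uderiv ψ p) := by
      funext p
      rw [hUsmul c ψ' p, Pi.smul_apply]
      simp only [smul_eq_mul]
      ring
    rw [sigmaIm, key, integral_smul]
    rfl
  · -- weak non-degeneracy
    intro ψ' hψ' h
    set χ : ℝ → ℝ := fun u => -Real.arctan u with hχ
    have hχderiv : ∀ u : ℝ, HasDerivAt χ (-(1 / (1 + u ^ 2))) u :=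
      fun u => (Real.hasDerivAt_arctan u).neg
    have hχbound : ∀ u : ℝ, |χ u| ≤ Real.pi / 2 := by
      intro u
      rw [hχ, abs_neg, abs_le]
      exact ⟨le_of_lt (Real.neg_pi_div_two_lt_arctan u), le_of_lt (Real.arctan_lt_pi_div_two u)⟩
    set ψ : ℝ × S2 → ℝ := fun p => χ p.1 * ψ' p with hψdef
    have hψ'cont : Continuous ψ' := hψ'.1.continuous
    have hχcont : Continuous χ := Real.continuous_arctan.neg
    -- derivative of ψ in u
    have hud : ∀ p : ℝ × S2,
        uderiv ψ p = -(1 / (1 + p.1 ^ 2)) * ψ' p + χ p.1 * uderiv ψ' p := by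
      intro p
      have hd : HasDerivAt (fun u : ℝ => χ u * ψ' (u, p.2))
          (-(1 / (1 + p.1 ^ 2)) * ψ' (p.1, p.2) + χ p.1 * deriv (fun u => ψ' (u, p.2)) p.1)
          p.1 :=
        (hχderiv p.1).mul ((slice_differentiable hψ'.1 p.2 p.1).hasDerivAt)
      have := hd.deriv
      simpa [uderiv, ψ] using this
    -- ψ ∈ S(ℑ)
    have hψmem : InSIm ψ := by
      refine ⟨?_, ?_, ?_⟩
      · have hχsmooth : ContMDiff 𝓘(ℝ, ℝ) 𝓘(ℝ, ℝ) (⊤ : ℕ∞) χ :=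
          ((Real.contDiff_arctan.neg).of_le le_top).contMDiff
        exact (hχsmooth.comp contMDiff_fst).mul hψ'.1
      · refine MemLp.of_le_mul (c := Real.pi / 2) hψ'.2.1
          ((hχcont.comp continuous_fst).mul hψ'cont).aestronglyMeasurable
          (Eventually.of_forall fun p => ?_)
        rw [Real.norm_eq_abs, Real.norm_eq_abs, abs_mul]
        exact mul_le_mul_of_nonneg_right (hχbound p.1) (abs_nonneg _)
      · have heq : uderiv ψ
            = fun p => -(1 / (1 + p.1 ^ 2)) * ψ' p + χ p.1 * uderiv ψ' p := funext hud
        rw [heq]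
        have hb : ∀ u : ℝ, |(-(1 / (1 + u ^ 2)) : ℝ)| ≤ 1 := by
          intro u
          rw [abs_neg, abs_of_nonneg (by positivity)]
          rw [div_le_one (by positivity)]
          nlinarith [sq_nonneg u]
        have hfrac : Continuous (fun u : ℝ => -(1 / (1 + u ^ 2))) := by
          have h0 : ∀ u : ℝ, (1 : ℝ) + u ^ 2 ≠ 0 := fun u => by positivity
          exact (continuous_const.div (by continuity) h0).neg
        refine MemLp.add ?_ ?_
        · refine MemLp.of_le_mul (c := 1) hψ'.2.1
            (((hfrac.comp continuous_fst).mul hψ'cont).aestronglyMeasurable)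
            (Eventually.of_forall fun p => ?_)
          rw [Real.norm_eq_abs, Real.norm_eq_abs, abs_mul, one_mul]
          exact mul_le_of_le_one_left (abs_nonneg _) (hb p.1)
        · refine MemLp.of_le_mul (c := Real.pi / 2) hψ'.2.2
            (((hχcont.comp continuous_fst).aestronglyMeasurable).mul hψ'.2.2.1)
            (Eventually.of_forall fun p => ?_)
          rw [Real.norm_eq_abs, Real.norm_eq_abs, abs_mul]
          exact mul_le_mul_of_nonneg_right (hχbound p.1) (abs_nonneg _)
    -- the integrand for this choice of ψ
    have hintegrand : (fun p : ℝ × S2 => ψ p * uderiv ψ' p - ψ' p * uderiv ψ p)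
        = fun p => (1 / (1 + p.1 ^ 2)) * ψ' p ^ 2 := by
      funext p
      rw [hud p, hψdef]
      ring
    have hzero : sigmaIm ψ ψ' = 0 := h ψ hψmem
    rw [sigmaIm, hintegrand] at hzero
    have hint2 : Integrable (fun p : ℝ × S2 => (1 / (1 + p.1 ^ 2)) * ψ' p ^ 2)
        (volume : Measure (ℝ × S2)) := by
      have := hInt ψ ψ' hψmem hψ'
      rwa [hintegrand] at this
    have hae : (fun p : ℝ × S2 => (1 / (1 + p.1 ^ 2)) * ψ' p ^ 2)
        =ᵐ[volume] 0 := by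
      refine (integral_eq_zero_iff_of_nonneg (fun p => ?_) hint2).mp hzero
      positivity
    have hae' : ψ' =ᵐ[(volume : Measure (ℝ × S2))] (fun _ => 0) := by
      filter_upwards [hae] with p hp
      have h1 : (0:ℝ) < 1 / (1 + p.1 ^ 2) := by positivity
      simp only [Pi.zero_apply] at hp
      have h2 : ψ' p ^ 2 = 0 := by
        rcases mul_eq_zero.mp hp with hcase | hcase
        · exact absurd hcase h1.ne'
        · exact hcase
      exact pow_eq_zero_iff (two_ne_zero) |>.mp h2
    have := (Continuous.ae_eq_iff_eq (volume : Measure (ℝ × S2)) hψ'cont continuous_const).mp hae'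
    funext p
    rw [this]
    rfl
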